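/- arXiv:1405.6430 — 2 statements merged into one kernel-verified Lean document; each statement's English description precedes it below -/
import Mathlib

section
/- Let $A$ be an abelian variety over an uncountable algebraically closed field and $K \subseteq A$ a subgroup which is a countable union of Zariski closed subsets. Let $A_0$ be the unique irreducible component of the irredundant decomposition of $K$ passing through $0$ (an abelian subvariety). Then there exists a countable subset $\Xi \subseteq K$ such that $K = \bigcup_{x \in \Xi} (x + A_0)$, i.e. $K$ is a countable union of translates of $A_0$. -/
open MvPolynomial

/-- Projective `n`-space over `k`, modeled as the projectivization of `k^(n+1)`. -/
abbrev ProjSpace (k : Type) [Field k] (n : ℕ) : Type :=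
  Projectivization k (Fin (n + 1) → k)

/-- Zariski closed subsets of projective space: common zero loci of sets of
homogeneous polynomials. -/
def ProjClosed (k : Type) [Field k] {n : ℕ} (C : Set (ProjSpace k n)) : Prop :=
  ∃ S : Set (MvPolynomial (Fin (n + 1)) k),
    (∀ f ∈ S, ∃ d, MvPolynomial.IsHomogeneous f d) ∧
    C = {x | ∀ f ∈ S, ∀ (v : Fin (n + 1) → k) (hv : v ≠ 0),
          Projectivization.mk k v hv = x → MvPolynomial.eval v f = 0}

variable {α : Type*}

/-- `W` is a Zariski closed subset of the variety `V`, where `zc` is the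
ambient Zariski-closedness predicate. -/
def ClosedIn (zc : Set α → Prop) (V W : Set α) : Prop :=
  W ⊆ V ∧ ∃ C, zc C ∧ W = V ∩ C

/-- `U` is a Zariski open subset of `V`. -/
def OpenIn (zc : Set α → Prop) (V U : Set α) : Prop :=
  ∃ W, ClosedIn zc V W ∧ U = V \ W

/-- `S ⊆ V` is irreducible. -/
def IrredIn (zc : Set α → Prop) (V S : Set α) : Prop :=
  S.Nonempty ∧ ∀ W₁ W₂, ClosedIn zc V W₁ → ClosedIn zc V W₂ →
    S ⊆ W₁ ∪ W₂ → S ⊆ W₁ ∨ S ⊆ W₂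

/-- `W` is an irreducible Zariski closed subset of `V`. -/
def IrredClosedIn (zc : Set α → Prop) (V W : Set α) : Prop :=
  ClosedIn zc V W ∧ IrredIn zc V W

/-- `W ⊆ V` is c-closed: a countable union of irreducible Zariski closed subsets. -/
def CClosedIn (zc : Set α → Prop) (V W : Set α) : Prop :=
  ∃ 𝒞 : Set (Set α), 𝒞.Countable ∧ (∀ C ∈ 𝒞, IrredClosedIn zc V C) ∧ W = ⋃₀ 𝒞

/-- `U ⊆ V` is c-open: the complement in `V` of a c-closed subset. -/
def COpenIn (zc : Set α → Prop) (V U : Set α) : Prop :=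
  ∃ W, CClosedIn zc V W ∧ U = V \ W

/-- A quasi-projective variety: an irreducible Zariski locally closed subset
of projective space. -/
def IsQuasiProjectiveVariety (k : Type) [Field k] {n : ℕ} (V : Set (ProjSpace k n)) : Prop :=
  (∃ C₁ C₂, ProjClosed k C₁ ∧ ProjClosed k C₂ ∧ V = C₁ \ C₂) ∧
    IrredIn (ProjClosed k) Set.univ V

/-- A model of an abelian variety over `k`: a projective irreducible group
variety, together with the regularity/completeness properties of its group
operations used in this paper. -/
structure AbelianVariety (k : Type) [Field k] (n : ℕ) where
  carrier : Set (ProjSpace k n)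
  carrier_closed : ProjClosed k carrier
  carrier_irred : IrredIn (ProjClosed k) Set.univ carrier
  zero : ProjSpace k n
  zero_mem : zero ∈ carrier
  add : ProjSpace k n → ProjSpace k n → ProjSpace k n
  neg : ProjSpace k n → ProjSpace k n
  add_mem : ∀ {x y}, x ∈ carrier → y ∈ carrier → add x y ∈ carrier
  neg_mem : ∀ {x}, x ∈ carrier → neg x ∈ carrier
  add_comm : ∀ x ∈ carrier, ∀ y ∈ carrier, add x y = add y x
  add_assoc : ∀ x ∈ carrier, ∀ y ∈ carrier, ∀ z ∈ carrier,
    add (add x y) z = add x (add y z)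
  zero_add : ∀ x ∈ carrier, add zero x = x
  neg_add_cancel : ∀ x ∈ carrier, add (neg x) x = zero
  /-- points are Zariski closed (and trivially irreducible) -/
  singleton_closed : ∀ x ∈ carrier, IrredClosedIn (ProjClosed k) carrier {x}
  /-- regularity and completeness: the image of a product of irreducible
  Zariski closed subsets under addition is irreducible Zariski closed -/
  image2_add_closed : ∀ W₁ W₂, IrredClosedIn (ProjClosed k) carrier W₁ →
    IrredClosedIn (ProjClosed k) carrier W₂ →
    IrredClosedIn (ProjClosed k) carrier (Set.image2 add W₁ W₂)
  /-- regularity of the inverse: the image of an irreducible Zariski closed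
  subset under negation is irreducible Zariski closed -/
  image_neg_closed : ∀ W, IrredClosedIn (ProjClosed k) carrier W →
    IrredClosedIn (ProjClosed k) carrier (neg '' W)

namespace AbelianVariety

variable {k : Type} [Field k] {n : ℕ} (A : AbelianVariety k n)

/-- Zariski closed subsets of the abelian variety `A`. -/
def ZClosed (W : Set (ProjSpace k n)) : Prop :=
  ClosedIn (ProjClosed k) A.carrier W

/-- Irreducible Zariski closed subsets of `A`. -/
def ZClosedIrred (W : Set (ProjSpace k n)) : Prop :=
  IrredClosedIn (ProjClosed k) A.carrier W

/-- `K` is a subgroup of the group of closed points of `A`. -/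
def IsSubgroupSet (K : Set (ProjSpace k n)) : Prop :=
  K ⊆ A.carrier ∧ A.zero ∈ K ∧ (∀ x ∈ K, ∀ y ∈ K, A.add x y ∈ K) ∧ ∀ x ∈ K, A.neg x ∈ K

/-- `K` is a countable union of Zariski closed subsets of `A`. -/
def IsCClosed (K : Set (ProjSpace k n)) : Prop :=
  ∃ 𝒞 : Set (Set (ProjSpace k n)), 𝒞.Countable ∧ (∀ C ∈ 𝒞, A.ZClosed C) ∧ K = ⋃₀ 𝒞

/-- `𝒞` is an irredundant decomposition of `K`: a countable collection of
irreducible Zariski closed subsets, none contained in another, with union `K`. -/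
def IsIrredundantDecomp (K : Set (ProjSpace k n)) (𝒞 : Set (Set (ProjSpace k n))) : Prop :=
  𝒞.Countable ∧ (∀ C ∈ 𝒞, A.ZClosedIrred C) ∧ K = ⋃₀ 𝒞 ∧
    ∀ C ∈ 𝒞, ∀ D ∈ 𝒞, C ⊆ D → C = D

/-- An abelian subvariety: an irreducible Zariski closed subgroup. -/
def IsAbelianSubvariety (B : Set (ProjSpace k n)) : Prop :=
  A.ZClosedIrred B ∧ A.IsSubgroupSet B

/-- The translate `x + W` of a subset `W` of `A`. -/
def translate (x : ProjSpace k n) (W : Set (ProjSpace k n)) : Set (ProjSpace k n) :=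
  A.add x '' W

end AbelianVariety

namespace Statement5Aux

theorem evalSmulHomog {σ K : Type*} [CommSemiring K] {f : MvPolynomial σ K} {d : ℕ}
    (hf : f.IsHomogeneous d) (a : K) (v : σ → K) :
    eval (a • v) f = a ^ d * eval v f := by
  rw [eval_eq, eval_eq, Finset.mul_sum]
  refine Finset.sum_congr rfl fun m hm => ?_
  have hdeg : ∑ i ∈ m.support, m i = d := by
    have := hf (mem_support_iff.1 hm)
    simpa [Finsupp.weight, Finsupp.linearCombination_apply, Finsupp.sum, mul_comm] using this
  have h1 : (∏ i ∈ m.support, a ^ m i) = a ^ d := by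
    rw [Finset.prod_pow_eq_pow_sum, hdeg]
  calc coeff m f * ∏ i ∈ m.support, (a • v) i ^ m i
      = coeff m f * ((∏ i ∈ m.support, a ^ m i) * ∏ i ∈ m.support, v i ^ m i) := by
        rw [← Finset.prod_mul_distrib]; simp [Pi.smul_apply, smul_eq_mul, mul_pow]
    _ = a ^ d * (coeff m f * ∏ i ∈ m.support, v i ^ m i) := by rw [h1]; ring

theorem algebraMapSurjOfRank (k : Type) [Field k] [IsAlgClosed k] [Uncountable k]
    (L : Type) [Field L] [Algebra k L]
    (h : Module.rank k L ≤ Cardinal.aleph0) : Function.Surjective (algebraMap k L) := by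
  have halg : Algebra.IsAlgebraic k L := by
    constructor
    intro x
    by_contra ht
    have := (Transcendental.linearIndependent_sub_inv (ht : Transcendental k x)).cardinal_le_rank
    exact absurd (this.trans h) (not_le.2 (Cardinal.aleph0_lt_mk (α := k)))
  have : Algebra.IsIntegral k L := Algebra.IsAlgebraic.isIntegral
  exact IsAlgClosed.algebraMap_bijective_of_isIntegral.2

variable {k : Type} [Field k] {n : ℕ}

/-- `f` vanishes at every representative of every point of `W`. -/
def VanOn (W : Set (ProjSpace k n)) (f : MvPolynomial (Fin (n+1)) k) : Prop :=
  ∀ (v : Fin (n+1) → k) (hv : v ≠ 0), Projectivization.mk k v hv ∈ W → eval v f = 0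

theorem vanOn_mul (A : AbelianVariety k n) {W : Set (ProjSpace k n)}
    (hW : A.ZClosedIrred W) {f g : MvPolynomial (Fin (n+1)) k} {df dg : ℕ}
    (hf : f.IsHomogeneous df) (hg : g.IsHomogeneous dg)
    (h : VanOn W (f * g)) : VanOn W f ∨ VanOn W g := by
  obtain ⟨hWcl, hWne, hWirr⟩ := hW
  have hWsub : W ⊆ A.carrier := hWcl.1
  let Zf : Set (ProjSpace k n) := {x | ∀ (v : Fin (n+1) → k) (hv : v ≠ 0),
    Projectivization.mk k v hv = x → eval v f = 0}
  let Zg : Set (ProjSpace k n) := {x | ∀ (v : Fin (n+1) → k) (hv : v ≠ 0),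
    Projectivization.mk k v hv = x → eval v g = 0}
  have hZf : ProjClosed k Zf := by
    refine ⟨{f}, ?_, ?_⟩
    · rintro f' hf'; rw [Set.mem_singleton_iff] at hf'; subst hf'; exact ⟨df, hf⟩
    · ext x; simp [Zf]
  have hZg : ProjClosed k Zg := by
    refine ⟨{g}, ?_, ?_⟩
    · rintro g' hg'; rw [Set.mem_singleton_iff] at hg'; subst hg'; exact ⟨dg, hg⟩
    · ext x; simp [Zg]
  have hclf : ClosedIn (ProjClosed k) A.carrier (A.carrier ∩ Zf) :=
    ⟨Set.inter_subset_left, Zf, hZf, rfl⟩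
  have hclg : ClosedIn (ProjClosed k) A.carrier (A.carrier ∩ Zg) :=
    ⟨Set.inter_subset_left, Zg, hZg, rfl⟩
  have cover : W ⊆ (A.carrier ∩ Zf) ∪ (A.carrier ∩ Zg) := by
    intro x hx
    have hxc := hWsub hx
    have h0 : eval x.rep (f * g) = 0 :=
      h x.rep x.rep_nonzero (by rwa [Projectivization.mk_rep])
    rw [map_mul] at h0
    rcases mul_eq_zero.1 h0 with h1 | h1
    · refine Or.inl ⟨hxc, fun v hv hmk => ?_⟩
      obtain ⟨a, ha⟩ := (Projectivization.mk_eq_mk_iff k v x.rep hv x.rep_nonzero).1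
        (by rw [hmk, Projectivization.mk_rep])
      rw [← ha, Units.smul_def, evalSmulHomog hf, h1, mul_zero]
    · refine Or.inr ⟨hxc, fun v hv hmk => ?_⟩
      obtain ⟨a, ha⟩ := (Projectivization.mk_eq_mk_iff k v x.rep hv x.rep_nonzero).1
        (by rw [hmk, Projectivization.mk_rep])
      rw [← ha, Units.smul_def, evalSmulHomog hg, h1, mul_zero]
  rcases hWirr _ _ hclf hclg cover with hsub | hsub
  · exact Or.inl fun v hv hx => (hsub hx).2 v hv rfl
  · exact Or.inr fun v hv hx => (hsub hx).2 v hv rfl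

end Statement5Aux
namespace Statement5Aux

theorem residueSurj (k : Type) [Field k] [IsAlgClosed k] [Uncountable k]
    (Rl : Type) [CommRing Rl] [Algebra k Rl] (mx : Ideal Rl) [mx.IsMaximal]
    (h : Module.rank k Rl ≤ Cardinal.aleph0) :
    Function.Surjective (algebraMap k (Rl ⧸ mx)) := by
  letI : Field (Rl ⧸ mx) := Ideal.Quotient.field mx
  have hrank : Module.rank k (Rl ⧸ mx) ≤ Cardinal.aleph0 :=
    le_trans (LinearMap.rank_le_of_surjective (Ideal.Quotient.mkₐ k mx).toLinearMap
      (Ideal.Quotient.mkₐ_surjective k mx)) h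
  have halg : Algebra.IsAlgebraic k (Rl ⧸ mx) := by
    constructor
    intro x
    by_contra ht
    have := (Transcendental.linearIndependent_sub_inv
      (ht : Transcendental k x)).cardinal_le_rank
    exact absurd (this.trans hrank) (not_le.2 (Cardinal.aleph0_lt_mk (α := k)))
  have : Algebra.IsIntegral k (Rl ⧸ mx) := Algebra.IsAlgebraic.isIntegral
  exact IsAlgClosed.algebraMap_bijective_of_isIntegral.2

set_option maxHeartbeats 1000000 in
set_option synthInstance.maxHeartbeats 400000 in
/-- Key lemma: over an uncountable algebraically closed field, an irreducible
Zariski closed subset of `A` covered by countably many Zariski closed subsets is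
contained in one of them. -/
theorem star {k : Type} [Field k] [IsAlgClosed k] [Uncountable k] {n : ℕ}
    (A : AbelianVariety k n) {W : Set (ProjSpace k n)}
    (hW : A.ZClosedIrred W) {𝒟 : Set (Set (ProjSpace k n))}
    (hcnt : 𝒟.Countable) (hcl : ∀ C ∈ 𝒟, A.ZClosed C) (hcov : W ⊆ ⋃₀ 𝒟) :
    ∃ C ∈ 𝒟, W ⊆ C := by
  by_contra hno
  push_neg at hno
  obtain ⟨hWcl, hWne, hWirr⟩ := hW
  have hWsub : W ⊆ A.carrier := hWcl.1
  obtain ⟨w, hw⟩ := hWne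
  have h𝒟ne : 𝒟.Nonempty := by
    obtain ⟨C, hC, _⟩ := hcov hw; exact ⟨C, hC⟩
  obtain ⟨e, he⟩ := Set.Countable.exists_eq_range hcnt h𝒟ne
  -- choose, for each i, a homogeneous polynomial vanishing on e i but not on W
  have hex : ∀ i : ℕ, ∃ f : MvPolynomial (Fin (n+1)) k, (∃ d, f.IsHomogeneous d) ∧
      ¬ VanOn W f ∧ ∀ x ∈ e i, ∀ (v : Fin (n+1) → k) (hv : v ≠ 0),
        Projectivization.mk k v hv = x → eval v f = 0 := by
    intro i
    have hmemi : e i ∈ 𝒟 := by rw [he]; exact ⟨i, rfl⟩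
    obtain ⟨Z, hZ, hCeq⟩ := (hcl _ hmemi).2
    obtain ⟨S, hS, hZeq⟩ := hZ
    obtain ⟨x, hxW, hxn⟩ := Set.not_subset.1 (hno _ hmemi)
    have hxZ : x ∉ Z := fun hxZ => hxn (by rw [hCeq]; exact ⟨hWsub hxW, hxZ⟩)
    rw [hZeq] at hxZ
    simp only [Set.mem_setOf_eq] at hxZ
    push_neg at hxZ
    obtain ⟨f, hfS, v, hv, hmk, hne0⟩ := hxZ
    refine ⟨f, hS f hfS, fun hvan => hne0 (hvan v hv (by rw [hmk]; exact hxW)), ?_⟩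
    intro y hy v' hv' hmk'
    rw [hCeq] at hy
    have hyZ := hy.2
    rw [hZeq] at hyZ
    exact hyZ f hfS v' hv' hmk'
  choose f hfhom hfnv hfvan using hex
  obtain ⟨j, hj⟩ : ∃ j, w.rep j ≠ 0 := by
    by_contra hcon
    push_neg at hcon
    exact w.rep_nonzero (funext hcon)
  set F : ℕ → MvPolynomial (Fin (n+1)) k := fun i => Nat.casesOn i (X j) f with hF
  have hFhom : ∀ i, ∃ d, (F i).IsHomogeneous d := by
    rintro (_|i)
    exacts [⟨1, isHomogeneous_X _ _⟩, hfhom i]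
  have hFnv : ∀ i, ¬ VanOn W (F i) := by
    rintro (_|i)
    · intro hvan
      have := hvan w.rep w.rep_nonzero (by rwa [Projectivization.mk_rep])
      rw [show F 0 = X j from rfl, eval_X] at this
      exact hj this
    · exact hfnv i
  -- the localization of the polynomial ring at the monoid generated by the F i
  set M : Submonoid (MvPolynomial (Fin (n+1)) k) := Submonoid.closure (Set.range F) with hM
  have hMprop : ∀ m ∈ M, (∃ d, IsHomogeneous m d) ∧ ¬ VanOn W m := by
    intro m hm
    refine Submonoid.closure_induction ?_ ?_ ?_ hm
    · rintro y ⟨i, rfl⟩; exact ⟨hFhom i, hFnv i⟩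
    · refine ⟨⟨0, isHomogeneous_one _ _⟩, fun hvan => ?_⟩
      have := hvan w.rep w.rep_nonzero (by rwa [Projectivization.mk_rep])
      rw [map_one] at this
      exact one_ne_zero this
    · rintro a b _ _ ⟨⟨da, hda⟩, hqa⟩ ⟨⟨db, hdb⟩, hqb⟩
      refine ⟨⟨da + db, hda.mul hdb⟩, fun hvan => ?_⟩
      rcases vanOn_mul A ⟨hWcl, ⟨w, hw⟩, hWirr⟩ hda hdb hvan with h | h
      exacts [hqa h, hqb h]
  -- the ideal of polynomials vanishing on W
  set I : Ideal (MvPolynomial (Fin (n+1)) k) :=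
    { carrier := {q | VanOn W q}
      add_mem' := fun {a b} ha hb v hv hx => by
        rw [map_add, ha v hv hx, hb v hv hx, add_zero]
      zero_mem' := fun v hv hx => map_zero _
      smul_mem' := fun c q hq v hv hx => by
        rw [smul_eq_mul, map_mul, hq v hv hx, mul_zero] } with hI
  have hMI : ∀ m ∈ M, m ∉ I := fun m hm => (hMprop m hm).2
  set Loc := Localization M with hLoc
  -- the image of I in the localization is a proper ideal
  set J : Ideal Loc := I.map (algebraMap (MvPolynomial (Fin (n+1)) k) Loc) with hJ
  have hJne : J ≠ ⊤ := by
    intro htop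
    have h1 : (1 : Loc) ∈ J := htop ▸ Submodule.mem_top
    rw [hJ, IsLocalization.mem_map_algebraMap_iff M] at h1
    obtain ⟨⟨q, s⟩, hqs⟩ := h1
    rw [one_mul] at hqs
    have hMle : M ≤ nonZeroDivisors (MvPolynomial (Fin (n+1)) k) := by
      intro m hm
      refine mem_nonZeroDivisors_of_ne_zero fun h0 => ?_
      exact (hMprop m hm).2 (by rw [h0]; intro v hv hx; exact map_zero _)
    have hinj := IsLocalization.injective Loc hMle
    have : (s : MvPolynomial (Fin (n+1)) k) = (q : MvPolynomial (Fin (n+1)) k) := hinj hqs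
    exact hMI s s.2 (this ▸ q.2)
  obtain ⟨mx, hmx, hJmx⟩ := Ideal.exists_le_maximal J hJne
  haveI : mx.IsMaximal := hmx
  -- the residue field has countable dimension over k
  set g : ((Fin (n+1) →₀ ℕ) × M) → Loc := fun p =>
    algebraMap (MvPolynomial (Fin (n+1)) k) Loc (monomial p.1 1) *
      IsLocalization.mk' Loc (1 : MvPolynomial (Fin (n+1)) k) p.2 with hg
  have hspan : Submodule.span k (Set.range g) = ⊤ := by
    rw [Submodule.eq_top_iff']
    intro z
    induction z using Localization.induction_on with
    | H p =>
      rcases p with ⟨q, s⟩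
      set ψ : MvPolynomial (Fin (n+1)) k →ₗ[k] Loc :=
        (LinearMap.mulRight k (IsLocalization.mk' Loc (1 : MvPolynomial (Fin (n+1)) k) s)).comp
          (IsScalarTower.toAlgHom k (MvPolynomial (Fin (n+1)) k) Loc).toLinearMap with hψ
      have hz : Localization.mk q s = ψ q := by
        rw [Localization.mk_eq_mk', IsLocalization.mk'_eq_mul_mk'_one]
        rfl
      rw [hz, ← MvPolynomial.support_sum_monomial_coeff q, map_sum]
      refine Submodule.sum_mem _ fun m hm => ?_
      have hmon : (monomial m (coeff m q)) = (coeff m q) • (monomial m (1:k)) := by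
        rw [smul_monomial, smul_eq_mul, mul_one]
      rw [hmon, map_smul]
      exact Submodule.smul_mem _ _ (Submodule.subset_span ⟨(m, s), rfl⟩)
  haveI hMcnt : Countable M := by
    have hlist : ∀ l : List (MvPolynomial (Fin (n+1)) k), (∀ y ∈ l, y ∈ Set.range F) →
        ∃ ln : List ℕ, (ln.map F).prod = l.prod := by
      intro l
      induction l with
      | nil => exact fun _ => ⟨[], by simp⟩
      | cons a t ih =>
        intro hl
        obtain ⟨i, hi⟩ := hl a (List.mem_cons_self)
        obtain ⟨ln, hln⟩ := ih fun y hy => hl y (List.mem_cons_of_mem a hy)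
        exact ⟨i :: ln, by rw [List.map_cons, List.prod_cons, hi, hln, List.prod_cons]⟩
    have hsur : ∀ m : M, ∃ l : List ℕ, ((l.map F).prod : MvPolynomial (Fin (n+1)) k) = m := by
      rintro ⟨m, hm⟩
      obtain ⟨l, hl, hprod⟩ := Submonoid.exists_list_of_mem_closure hm
      obtain ⟨ln, hln⟩ := hlist l hl
      exact ⟨ln, by rw [hln, hprod]⟩
    choose lst hlst using hsur
    have : Function.Injective lst := fun m1 m2 h12 => by
      apply Subtype.ext
      rw [← hlst m1, ← hlst m2, h12]
    exact Function.Injective.countable this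
  have hrankLoc : Module.rank k Loc ≤ Cardinal.aleph0 := by
    calc Module.rank k Loc = Module.rank k (⊤ : Submodule k Loc) := (rank_top k Loc).symm
      _ = Module.rank k (Submodule.span k (Set.range g)) := by rw [hspan]
      _ ≤ Cardinal.mk (Set.range g) := rank_span_le _
      _ ≤ Cardinal.mk ((Fin (n+1) →₀ ℕ) × M) := Cardinal.mk_range_le
      _ ≤ Cardinal.aleph0 := Cardinal.mk_le_aleph0
  have hsurj : Function.Surjective (algebraMap k (Loc ⧸ mx)) :=
    residueSurj k Loc mx hrankLoc
  -- build the point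
  set π : MvPolynomial (Fin (n+1)) k →ₐ[k] (Loc ⧸ mx) := (Ideal.Quotient.mkₐ k mx).comp
    (IsScalarTower.toAlgHom k (MvPolynomial (Fin (n+1)) k) Loc) with hπ
  choose c hc using fun i : Fin (n+1) => hsurj (π (X i))
  haveI : Nontrivial (Loc ⧸ mx) := Ideal.Quotient.nontrivial_iff.mpr hmx.ne_top
  have hinj : Function.Injective (algebraMap k (Loc ⧸ mx)) := (algebraMap k (Loc ⧸ mx)).injective
  have hev : ∀ q : MvPolynomial (Fin (n+1)) k, π q = (algebraMap k (Loc ⧸ mx) : k →+* Loc ⧸ mx) (eval c q) := by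
    have hhom : ((Algebra.ofId k (Loc ⧸ mx)).comp (MvPolynomial.aeval c) :
        MvPolynomial (Fin (n+1)) k →ₐ[k] (Loc ⧸ mx)) = π := by
      apply MvPolynomial.algHom_ext
      intro i
      simp [Algebra.ofId_apply, hc i]
    intro q
    rw [← hhom]
    have : (MvPolynomial.aeval c) q = eval c q := by
      rw [MvPolynomial.aeval_def, MvPolynomial.eval]
      rfl
    simp [Algebra.ofId_apply, this]
  have hvan0 : ∀ q, VanOn W q → eval c q = 0 := by
    intro q hq
    apply hinj
    rw [← hev q, map_zero]
    have hqJ : algebraMap (MvPolynomial (Fin (n+1)) k) Loc q ∈ mx :=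
      hJmx (Ideal.mem_map_of_mem _ hq)
    show (Ideal.Quotient.mkₐ k mx) (algebraMap (MvPolynomial (Fin (n+1)) k) Loc q) = 0
    rwa [Ideal.Quotient.mkₐ_eq_mk, Ideal.Quotient.eq_zero_iff_mem]
  have hFne : ∀ i, eval c (F i) ≠ 0 := by
    intro i h0
    have hu : IsUnit (algebraMap (MvPolynomial (Fin (n+1)) k) Loc (F i)) :=
      IsLocalization.map_units (M := M) Loc ⟨F i, Submonoid.subset_closure ⟨i, rfl⟩⟩
    have hu2 : IsUnit (π (F i)) := hu.map (Ideal.Quotient.mkₐ k mx)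
    rw [hev (F i), h0, map_zero] at hu2
    exact not_isUnit_zero (M₀ := Loc ⧸ mx) hu2
  have hcne : c ≠ 0 := by
    intro h0
    apply hFne 0
    rw [show F 0 = X j from rfl, eval_X, h0]
    rfl
  -- the point lies in W
  have hmemZ : ∀ (S : Set (MvPolynomial (Fin (n+1)) k)),
      (∀ q ∈ S, ∃ d, IsHomogeneous q d) → (∀ q ∈ S, eval c q = 0) →
      Projectivization.mk k c hcne ∈ {y | ∀ q ∈ S, ∀ (v : Fin (n+1) → k) (hv : v ≠ 0),
        Projectivization.mk k v hv = y → eval v q = 0} := by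
    intro S hSh hSz q hq v hv hmk
    obtain ⟨d, hd⟩ := hSh q hq
    obtain ⟨a, ha⟩ := (Projectivization.mk_eq_mk_iff k v c hv hcne).1 hmk
    rw [← ha, Units.smul_def, evalSmulHomog hd, hSz q hq, mul_zero]
  have hxcar : Projectivization.mk k c hcne ∈ A.carrier := by
    obtain ⟨S0, hS0h, hS0eq⟩ := A.carrier_closed
    rw [hS0eq]
    refine hmemZ S0 hS0h fun q hq => hvan0 q ?_
    intro v hv hvW
    have hvc := hWsub hvW
    rw [hS0eq] at hvc
    exact hvc q hq v hv rfl
  have hxW : Projectivization.mk k c hcne ∈ W := by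
    obtain ⟨Z, hZ, hWeq⟩ := hWcl.2
    obtain ⟨S1, hS1h, hS1eq⟩ := hZ
    rw [hWeq]
    refine ⟨hxcar, ?_⟩
    rw [hS1eq]
    refine hmemZ S1 hS1h fun q hq => hvan0 q ?_
    intro v hv hvW
    have hvz : Projectivization.mk k v hv ∈ Z := by
      rw [hWeq] at hvW; exact hvW.2
    rw [hS1eq] at hvz
    exact hvz q hq v hv rfl
  obtain ⟨Ci, hCi, hxCi⟩ := hcov hxW
  rw [he] at hCi
  obtain ⟨i, rfl⟩ := hCi
  exact hFne (i + 1) (hfvan i _ hxCi c hcne rfl)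


end Statement5Aux
/-- A c-closed subgroup `K` of an abelian variety over an uncountable
algebraically closed field is a countable union of translates of the component
`A₀` of its irredundant decomposition through `0`. -/
theorem statement5 (k : Type) [Field k] [IsAlgClosed k] [Uncountable k]
    {n : ℕ} (A : AbelianVariety k n) (K : Set (ProjSpace k n))
    (hsub : A.IsSubgroupSet K) (hcc : A.IsCClosed K)
    (𝒞 : Set (Set (ProjSpace k n))) (hdec : A.IsIrredundantDecomp K 𝒞)
    (A₀ : Set (ProjSpace k n)) (hA₀ : A₀ ∈ 𝒞) (h0 : A.zero ∈ A₀) :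
    ∃ Ξ : Set (ProjSpace k n), Ξ ⊆ K ∧ Ξ.Countable ∧
      K = ⋃ x ∈ Ξ, A.translate x A₀ := by
  classical
  obtain ⟨hKsub, hK0, hKadd, hKneg⟩ := hsub
  obtain ⟨hcntC, hirredC, hKeq, hanti⟩ := hdec
  have hCK : ∀ C ∈ 𝒞, C ⊆ K := by
    intro C hC y hy; rw [hKeq]; exact ⟨C, hC, hy⟩
  have hA₀K : A₀ ⊆ K := hCK _ hA₀
  have hA₀irr : A.ZClosedIrred A₀ := hirredC _ hA₀
  have hkey : ∀ C ∈ 𝒞, ∀ x ∈ C, C ⊆ A.translate x A₀ := by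
    intro C hC x hxC
    have hCirr := hirredC _ hC
    have hxK : x ∈ K := hCK _ hC hxC
    have hxA : x ∈ A.carrier := hKsub hxK
    have hnx : A.neg x ∈ A.carrier := A.neg_mem hxA
    have hsngl := A.singleton_closed (A.neg x) hnx
    have hC' : A.ZClosedIrred (Set.image2 A.add {A.neg x} C) :=
      A.image2_add_closed _ _ hsngl hCirr
    have hD : A.ZClosedIrred (Set.image2 A.add A₀ (Set.image2 A.add {A.neg x} C)) :=
      A.image2_add_closed _ _ hA₀irr hC'
    have hC'K : Set.image2 A.add {A.neg x} C ⊆ K := by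
      rintro _ ⟨a, rfl, b, hb, rfl⟩
      exact hKadd _ (hKneg x hxK) _ (hCK _ hC hb)
    have hDK : Set.image2 A.add A₀ (Set.image2 A.add {A.neg x} C) ⊆ K := by
      rintro _ ⟨a, ha, b, hb, rfl⟩
      exact hKadd _ (hA₀K ha) _ (hC'K hb)
    have hDsub : Set.image2 A.add A₀ (Set.image2 A.add {A.neg x} C) ⊆ ⋃₀ 𝒞 := by
      rw [← hKeq]; exact hDK
    obtain ⟨E, hE, hDE⟩ := Statement5Aux.star A hD hcntC
      (fun C' hC' => (hirredC C' hC').1) hDsub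
    have hzeroC' : A.zero ∈ Set.image2 A.add {A.neg x} C :=
      ⟨A.neg x, rfl, x, hxC, A.neg_add_cancel x hxA⟩
    have hA₀D : A₀ ⊆ Set.image2 A.add A₀ (Set.image2 A.add {A.neg x} C) := by
      intro a ha
      have haA : a ∈ A.carrier := hA₀irr.1.1 ha
      refine ⟨a, ha, A.zero, hzeroC', ?_⟩
      rw [A.add_comm a haA A.zero A.zero_mem, A.zero_add a haA]
    have hEA₀ : A₀ = E := hanti _ hA₀ _ hE (hA₀D.trans hDE)
    have hC'A₀ : Set.image2 A.add {A.neg x} C ⊆ A₀ := by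
      intro b hb
      have hbA : b ∈ A.carrier := hKsub (hC'K hb)
      have hbE : A.add A.zero b ∈ E := hDE ⟨A.zero, h0, b, hb, rfl⟩
      rw [A.zero_add b hbA] at hbE
      rw [hEA₀]; exact hbE
    intro y hy
    have hyA : y ∈ A.carrier := hKsub (hCK _ hC hy)
    refine ⟨A.add (A.neg x) y, hC'A₀ ⟨A.neg x, rfl, y, hy, rfl⟩, ?_⟩
    have hxnx : A.add x (A.neg x) = A.zero := by
      rw [A.add_comm x hxA (A.neg x) hnx]; exact A.neg_add_cancel x hxA
    rw [← A.add_assoc x hxA (A.neg x) hnx y hyA, hxnx, A.zero_add y hyA]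
  set pick : Set (ProjSpace k n) → ProjSpace k n :=
    fun C => if h : C.Nonempty then h.choose else A.zero with hpick
  have hpickmem : ∀ C ∈ 𝒞, pick C ∈ C := by
    intro C hC
    have hCne : C.Nonempty := (hirredC _ hC).2.1
    rw [hpick]; simp only [dif_pos hCne]; exact hCne.choose_spec
  refine ⟨pick '' 𝒞, ?_, hcntC.image _, ?_⟩
  · rintro _ ⟨C, hC, rfl⟩
    exact hCK _ hC (hpickmem C hC)
  · apply Set.Subset.antisymm
    · intro y hy
      rw [hKeq] at hy
      obtain ⟨C, hC, hyC⟩ := hy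
      exact Set.mem_biUnion ⟨C, hC, rfl⟩ (hkey C hC (pick C) (hpickmem C hC) hyC)
    · intro y hy
      simp only [Set.mem_iUnion] at hy
      obtain ⟨x, ⟨C, hC, rfl⟩, hyT⟩ := hy
      obtain ⟨a, haA₀, rfl⟩ := hyT
      exact hKadd _ (hCK _ hC (hpickmem C hC)) _ (hA₀K haA₀)
end

section
/- Let $k$ be an uncountable algebraically closed field, $A$ an abelian variety over $k$, $K \subseteq A$ a subgroup which is a countable union of Zariski closed subsets, and $A_0$ the abelian subvariety given by the component of $K$ through $0$. If $K = \bigcup_{n} K_n$ is the irredundant decomposition, then for every $x \in K$ there exists $n$ with $x + A_0 = K_n$; in particular each $c$-component of $K$ is a translate of $A_0$. -/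
open MvPolynomial

variable {α : Type*}

/-! ### Auxiliary material for `statement12` -/

section AuxLinear

open Cardinal Submodule in
theorem aux_rank_le_aleph0_of_countable_span {k M : Type} [Field k] [AddCommGroup M] [Module k M]
    {U : Set M} (hU : U.Countable) (hsp : Submodule.span k U = ⊤) :
    Module.rank k M ≤ ℵ₀ := by
  have h1 : Module.rank k M = Module.rank k (⊤ : Submodule k M) := (rank_top k M).symm
  rw [h1, ← hsp]
  exact (rank_span_le U).trans (by rwa [Cardinal.mk_le_aleph0_iff, Set.countable_coe_iff])

open Cardinal Submodule in
theorem aux_exists_countable_span {k M : Type} [Field k] [AddCommGroup M] [Module k M]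
    (h : Module.rank k M ≤ ℵ₀) : ∃ U : Set M, U.Countable ∧ Submodule.span k U = ⊤ := by
  classical
  let b := Module.Basis.ofVectorSpace k M
  refine ⟨Set.range b, ?_, b.span_eq⟩
  have h1 : #(Module.Basis.ofVectorSpaceIndex k M) = Module.rank k M := b.mk_eq_rank''
  have : Countable (Module.Basis.ofVectorSpaceIndex k M) := by
    rw [← Cardinal.mk_le_aleph0_iff, h1]; exact h
  exact Set.countable_range _

open Cardinal in
/-- The "uncountable Nullstellensatz": a countable-dimensional domain over an uncountable
algebraically closed field admits a `k`-point avoiding any countable set of nonzero elements. -/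
theorem aux_exists_algHom_ne_zero {k : Type} [Field k] [IsAlgClosed k] [Uncountable k]
    {D : Type} [CommRing D] [IsDomain D] [Algebra k D]
    (hrank : Module.rank k D ≤ ℵ₀)
    (G : Set D) (hG : G.Countable) (hG0 : ∀ g ∈ G, g ≠ 0) :
    ∃ ψ : D →ₐ[k] k, ∀ g ∈ G, ψ g ≠ 0 := by
  classical
  set S : Submonoid D := Submonoid.closure G with hS
  have hS0 : ∀ s ∈ S, s ≠ 0 := by
    intro s hs
    induction hs using Submonoid.closure_induction with
    | mem x hx => exact hG0 x hx
    | one => exact one_ne_zero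
    | mul x y _ _ hx hy => exact mul_ne_zero hx hy
  have hSle : S ≤ nonZeroDivisors D := fun s hs => mem_nonZeroDivisors_of_ne_zero (hS0 s hs)
  set A := Localization S with hA
  haveI : IsDomain A := IsLocalization.isDomain_of_le_nonZeroDivisors A hSle
  have hSc : (S : Set D).Countable := by
    have hsub : (S : Set D) ⊆ Set.range (fun l : List G => (l.map (Subtype.val)).prod) := by
      intro x hx
      obtain ⟨l, hl, hlp⟩ := Submonoid.exists_list_of_mem_closure hx
      refine ⟨l.attach.map fun y => ⟨y.1, hl y.1 y.2⟩, ?_⟩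
      simp only [List.map_map]
      rw [← hlp]
      congr 1
      simp [Function.comp_def]
    haveI : Countable G := hG.to_subtype
    exact (Set.countable_range _).mono hsub
  obtain ⟨T, hTc, hTsp⟩ := aux_exists_countable_span hrank
  have hrankA : Module.rank k A ≤ ℵ₀ := by
    refine aux_rank_le_aleph0_of_countable_span (U := Set.image2
      (fun t (s : S) => algebraMap D A t * IsLocalization.mk' A 1 s) T Set.univ) ?_ ?_
    · exact Set.Countable.image2 hTc (by haveI := hSc.to_subtype; exact Set.countable_univ) _
    · rw [eq_top_iff]
      intro x _
      obtain ⟨⟨r, s⟩, rfl⟩ := IsLocalization.mk'_surjective S x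
      set L : D →ₗ[k] A :=
        (LinearMap.mulRight k (IsLocalization.mk' A 1 s)).comp
          (IsScalarTower.toAlgHom k D A).toLinearMap with hL
      have hx : IsLocalization.mk' A r s = L r := by
        simp only [hL, LinearMap.comp_apply, LinearMap.mulRight_apply,
          AlgHom.toLinearMap_apply, IsScalarTower.coe_toAlgHom']
        rw [← IsLocalization.mk'_eq_mul_mk'_one]
      change IsLocalization.mk' A r s ∈ _
      rw [hx]
      have hr : r ∈ Submodule.span k T := by rw [hTsp]; trivial
      have := Submodule.mem_map_of_mem (f := L) hr
      rw [← Submodule.span_image] at this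
      refine Submodule.span_mono ?_ this
      intro y ⟨t, ht, hty⟩
      exact ⟨t, ht, ⟨s, Set.mem_univ _, hty⟩⟩
  obtain ⟨m, hm⟩ := Ideal.exists_maximal A
  haveI := hm
  set F := A ⧸ m with hF
  letI : Field F := Ideal.Quotient.field m
  have hrankF : Module.rank k F ≤ ℵ₀ := by
    obtain ⟨U, hUc, hUsp⟩ := aux_exists_countable_span hrankA
    refine aux_rank_le_aleph0_of_countable_span (U := (Ideal.Quotient.mkₐ k m) '' U)
      (hUc.image _) ?_
    have himg : Submodule.span k ((Ideal.Quotient.mkₐ k m) '' U)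
        = Submodule.map (Ideal.Quotient.mkₐ k m).toLinearMap (Submodule.span k U) :=
      Submodule.span_image (Ideal.Quotient.mkₐ k m).toLinearMap
    rw [himg, hUsp, Submodule.map_top, LinearMap.range_eq_top]
    exact Ideal.Quotient.mkₐ_surjective k m
  haveI : Algebra.IsAlgebraic k F := by
    constructor
    intro x
    by_contra hx
    have li := Transcendental.linearIndependent_sub_inv (F := k) (E := F) hx
    have hle := li.cardinal_le_rank
    have : #k ≤ ℵ₀ := hle.trans hrankF
    rw [Cardinal.mk_le_aleph0_iff] at this
    exact not_countable this
  haveI : Algebra.IsIntegral k F := Algebra.IsAlgebraic.isIntegral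
  have hsurj : Function.Surjective (algebraMap k F) :=
    IsAlgClosed.algebraMap_bijective_of_isIntegral.2
  have hinj : Function.Injective (algebraMap k F) := (algebraMap k F).injective
  let e : k ≃ₐ[k] F := AlgEquiv.ofBijective (Algebra.ofId k F) ⟨hinj, hsurj⟩
  refine ⟨e.symm.toAlgHom.comp ((Ideal.Quotient.mkₐ k m).comp
    (IsScalarTower.toAlgHom k D A)), ?_⟩
  intro g hg
  have hu : IsUnit (algebraMap D A g) :=
    IsLocalization.map_units A (⟨g, Submonoid.subset_closure hg⟩ : S)
  have hu2 : IsUnit ((Ideal.Quotient.mkₐ k m) (algebraMap D A g)) :=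
    hu.map (Ideal.Quotient.mkₐ k m)
  have hne : (Ideal.Quotient.mkₐ k m) (algebraMap D A g) ≠ 0 := hu2.ne_zero
  intro h0
  apply hne
  have := congrArg e h0
  rw [map_zero] at this
  rw [← this]
  simp only [AlgHom.comp_apply, AlgEquiv.toAlgHom_eq_coe, AlgHom.coe_coe,
    IsScalarTower.coe_toAlgHom', AlgEquiv.apply_symm_apply]
  exact (e.apply_symm_apply _).symm

end AuxLinear

section AuxGeom

attribute [local instance] MvPolynomial.gradedAlgebra

variable {k : Type} [Field k] {n : ℕ}

theorem aux_eval_smul {σ : Type} {f : MvPolynomial σ k} {d : ℕ}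
    (hf : f.IsHomogeneous d) (c : k) (v : σ → k) :
    MvPolynomial.eval (c • v) f = c ^ d * MvPolynomial.eval v f := by
  classical
  rw [MvPolynomial.eval_eq, MvPolynomial.eval_eq, Finset.mul_sum]
  refine Finset.sum_congr rfl fun m hm => ?_
  have hdeg : m.degree = d := by
    rw [Finsupp.degree_eq_weight_one]; exact hf (MvPolynomial.mem_support_iff.mp hm)
  rw [← hdeg, Finsupp.degree_apply]
  simp only [Pi.smul_apply, smul_eq_mul, mul_pow]
  rw [Finset.prod_mul_distrib, Finset.prod_pow_eq_pow_sum _]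
  ring

/-- A homogeneous polynomial vanishing at one representative vanishes at all of them. -/
theorem aux_eval_eq_zero_of_mk_eq {f : MvPolynomial (Fin (n+1)) k} {d : ℕ}
    (hf : f.IsHomogeneous d) {v w : Fin (n+1) → k} {hv : v ≠ 0} {hw : w ≠ 0}
    (h : Projectivization.mk k v hv = Projectivization.mk k w hw)
    (h0 : MvPolynomial.eval w f = 0) : MvPolynomial.eval v f = 0 := by
  obtain ⟨a, ha⟩ := (Projectivization.mk_eq_mk_iff' k v w hv hw).mp h
  rw [← ha, aux_eval_smul hf, h0, mul_zero]

/-- The common zero locus in projective space of a set of polynomials. -/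
def zeroSet (S : Set (MvPolynomial (Fin (n + 1)) k)) : Set (ProjSpace k n) :=
  {x | ∀ f ∈ S, ∀ (v : Fin (n + 1) → k) (hv : v ≠ 0),
      Projectivization.mk k v hv = x → MvPolynomial.eval v f = 0}

theorem aux_projClosed_iff {C : Set (ProjSpace k n)} :
    ProjClosed k C ↔ ∃ S : Set (MvPolynomial (Fin (n + 1)) k),
      (∀ f ∈ S, ∃ d, MvPolynomial.IsHomogeneous f d) ∧ C = zeroSet S := Iff.rfl

theorem aux_mk_mem_zeroSet_iff {S : Set (MvPolynomial (Fin (n + 1)) k)}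
    (hS : ∀ f ∈ S, ∃ d, MvPolynomial.IsHomogeneous f d) {v : Fin (n+1) → k} (hv : v ≠ 0) :
    Projectivization.mk k v hv ∈ zeroSet S ↔ ∀ f ∈ S, MvPolynomial.eval v f = 0 := by
  constructor
  · intro h f hf
    exact h f hf v hv rfl
  · intro h f hf w hw hmk
    obtain ⟨d, hd⟩ := hS f hf
    exact aux_eval_eq_zero_of_mk_eq hd hmk (h f hf)

theorem aux_projClosed_inter {C₁ C₂ : Set (ProjSpace k n)}
    (h₁ : ProjClosed k C₁) (h₂ : ProjClosed k C₂) : ProjClosed k (C₁ ∩ C₂) := by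
  obtain ⟨S₁, hS₁, rfl⟩ := h₁
  obtain ⟨S₂, hS₂, rfl⟩ := h₂
  refine ⟨S₁ ∪ S₂, ?_, ?_⟩
  · intro f hf
    rcases hf with hf | hf
    exacts [hS₁ f hf, hS₂ f hf]
  · ext x
    constructor
    · rintro ⟨hx1, hx2⟩ f hf
      rcases hf with hf | hf
      exacts [hx1 f hf, hx2 f hf]
    · intro hx
      exact ⟨fun f hf => hx f (Or.inl hf), fun f hf => hx f (Or.inr hf)⟩

/-- The ideal of polynomials vanishing on the affine cone over `W`. -/
def coneIdeal (W : Set (ProjSpace k n)) : Ideal (MvPolynomial (Fin (n + 1)) k) where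
  carrier := {f | ∀ (v : Fin (n+1) → k) (hv : v ≠ 0),
      Projectivization.mk k v hv ∈ W → MvPolynomial.eval v f = 0}
  zero_mem' := by intro v hv hw; simp
  add_mem' := by
    intro a b ha hb v hv hw
    rw [map_add, ha v hv hw, hb v hv hw, add_zero]
  smul_mem' := by
    intro c f hf v hv hw
    rw [smul_eq_mul, map_mul, hf v hv hw, mul_zero]

theorem aux_mem_coneIdeal {W : Set (ProjSpace k n)} {f : MvPolynomial (Fin (n + 1)) k} :
    f ∈ coneIdeal W ↔ ∀ (v : Fin (n+1) → k) (hv : v ≠ 0),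
      Projectivization.mk k v hv ∈ W → MvPolynomial.eval v f = 0 := Iff.rfl

open MvPolynomial in
theorem aux_coneIdeal_isHomogeneous [Infinite k] (W : Set (ProjSpace k n)) :
    Ideal.IsHomogeneous (homogeneousSubmodule (Fin (n + 1)) k) (coneIdeal W) := by
  intro i f hf
  have hbridge : (DirectSum.decompose (homogeneousSubmodule (Fin (n+1)) k) f i :
      MvPolynomial (Fin (n+1)) k) = homogeneousComponent i f := by
    rw [DirectSum.decompose]
    exact MvPolynomial.decomposition.decompose'_apply f i
  rw [hbridge]
  intro v hv hvW
  set N := f.totalDegree with hN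
  set q : Polynomial k := ∑ d ∈ Finset.range (N + 1),
    Polynomial.monomial d (eval v (homogeneousComponent d f)) with hqdef
  have hq : ∀ c : k, c ≠ 0 → q.eval c = 0 := by
    intro c hc
    have h1 : (c • v) ≠ 0 := smul_ne_zero hc hv
    have h2 : Projectivization.mk k (c • v) h1 = Projectivization.mk k v hv := by
      rw [Projectivization.mk_eq_mk_iff']
      exact ⟨c, rfl⟩
    have h3 := hf (c • v) h1 (by rw [h2]; exact hvW)
    have h4 : eval (c • v) f = q.eval c := by
      conv_lhs => rw [← MvPolynomial.sum_homogeneousComponent f]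
      rw [map_sum, hqdef, Polynomial.eval_finset_sum]
      refine Finset.sum_congr rfl fun d _ => ?_
      rw [Polynomial.eval_monomial,
        aux_eval_smul (homogeneousComponent_isHomogeneous d f) c v, mul_comm]
    rw [← h4, h3]
  have hq0 : q = 0 := by
    apply Polynomial.eq_zero_of_infinite_isRoot
    refine Set.Infinite.mono ?_ ((Set.finite_singleton (0:k)).infinite_compl)
    intro c hc
    exact hq c hc
  by_cases hiN : i ≤ N
  · have hco : q.coeff i = eval v (homogeneousComponent i f) := by
      rw [hqdef, Polynomial.finset_sum_coeff]
      rw [Finset.sum_eq_single i (fun b _ hb => by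
        rw [Polynomial.coeff_monomial, if_neg hb]) (fun hni => by
        exact absurd (Finset.mem_range.mpr (by omega)) hni)]
      rw [Polynomial.coeff_monomial, if_pos rfl]
    rw [hq0, Polynomial.coeff_zero] at hco
    exact hco.symm
  · rw [homogeneousComponent_eq_zero _ f (by omega), map_zero]

open MvPolynomial in
theorem aux_coneIdeal_isPrime [Infinite k] {V W : Set (ProjSpace k n)} (hne : W.Nonempty)
    (hWV : W ⊆ V) (hirr : IrredIn (ProjClosed k) V W) : (coneIdeal W).IsPrime := by
  apply Ideal.IsHomogeneous.isPrime_of_homogeneous_mem_or_mem (aux_coneIdeal_isHomogeneous W)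
  · intro htop
    obtain ⟨x, hx⟩ := hne
    have h1 : (1 : MvPolynomial (Fin (n+1)) k) ∈ coneIdeal W := htop ▸ Submodule.mem_top
    have h2 := h1 x.rep (Projectivization.rep_nonzero x)
      (by rw [Projectivization.mk_rep]; exact hx)
    simp at h2
  · rintro f g ⟨df, hdf⟩ ⟨dg, hdg⟩ hfg
    rw [mem_homogeneousSubmodule] at hdf hdg
    have hZf : ProjClosed k (zeroSet {f}) :=
      ⟨{f}, by rintro f' rfl; exact ⟨df, hdf⟩, rfl⟩
    have hZg : ProjClosed k (zeroSet {g}) :=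
      ⟨{g}, by rintro g' rfl; exact ⟨dg, hdg⟩, rfl⟩
    have hcf : ClosedIn (ProjClosed k) V (V ∩ zeroSet {f}) :=
      ⟨Set.inter_subset_left, zeroSet {f}, hZf, rfl⟩
    have hcg : ClosedIn (ProjClosed k) V (V ∩ zeroSet {g}) :=
      ⟨Set.inter_subset_left, zeroSet {g}, hZg, rfl⟩
    have hcover : W ⊆ (V ∩ zeroSet {f}) ∪ (V ∩ zeroSet {g}) := by
      intro x hx
      have hrep := Projectivization.mk_rep x
      have h0 := hfg x.rep (Projectivization.rep_nonzero x) (by rw [hrep]; exact hx)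
      rw [map_mul] at h0
      rcases mul_eq_zero.mp h0 with h | h
      · left
        refine ⟨hWV hx, ?_⟩
        rw [← hrep, aux_mk_mem_zeroSet_iff (by rintro f' rfl; exact ⟨df, hdf⟩)]
        rintro f' rfl
        exact h
      · right
        refine ⟨hWV hx, ?_⟩
        rw [← hrep, aux_mk_mem_zeroSet_iff (by rintro g' rfl; exact ⟨dg, hdg⟩)]
        rintro g' rfl
        exact h
    rcases hirr.2 _ _ hcf hcg hcover with h | h
    · left
      intro v hv hvW
      exact (h hvW).2 f rfl v hv rfl
    · right
      intro v hv hvW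
      exact (h hvW).2 g rfl v hv rfl

open MvPolynomial in
/-- Baire-type property: an irreducible Zariski closed set over an uncountable
algebraically closed field covered by countably many Zariski closed sets is
contained in one of them. -/
theorem aux_subset_of_countable_cover [IsAlgClosed k] [Uncountable k]
    {V W : Set (ProjSpace k n)} (hWc : ProjClosed k W)
    (hWV : W ⊆ V) (hirr : IrredIn (ProjClosed k) V W)
    (𝒟 : Set (Set (ProjSpace k n))) (h𝒟 : 𝒟.Countable) (hcl : ∀ D ∈ 𝒟, ProjClosed k D)
    (hcov : W ⊆ ⋃₀ 𝒟) : ∃ D ∈ 𝒟, W ⊆ D := by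
  classical
  by_contra hcon
  push_neg at hcon
  obtain ⟨SW, hSW, hWeq⟩ := hWc
  have hne : W.Nonempty := hirr.1
  set I := coneIdeal W with hI
  haveI hprime : I.IsPrime := aux_coneIdeal_isPrime hne hWV hirr
  haveI : IsDomain (MvPolynomial (Fin (n+1)) k ⧸ I) := Ideal.Quotient.isDomain I
  -- a nonvanishing coordinate
  obtain ⟨x0, hx0⟩ := hne
  obtain ⟨j, hj⟩ : ∃ j, x0.rep j ≠ 0 := by
    by_contra hc
    push_neg at hc
    exact Projectivization.rep_nonzero x0 (funext hc)
  have hXj : (X j : MvPolynomial (Fin (n+1)) k) ∉ I := by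
    intro hmem
    have := hmem x0.rep (Projectivization.rep_nonzero x0)
      (by rw [Projectivization.mk_rep]; exact hx0)
    rw [eval_X] at this
    exact hj this
  -- choose, for each D in the cover, a polynomial vanishing on D but not on W
  have hchoice : ∀ D : 𝒟, ∃ f : MvPolynomial (Fin (n+1)) k,
      f ∉ I ∧ ∀ (v : Fin (n+1) → k) (hv : v ≠ 0),
        Projectivization.mk k v hv ∈ (D : Set (ProjSpace k n)) → eval v f = 0 := by
    rintro ⟨D, hD⟩
    obtain ⟨x, hxW, hxD⟩ := Set.not_subset.mp (hcon D hD)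
    obtain ⟨SD, hSD, hDeq⟩ := hcl D hD
    rw [hDeq] at hxD
    simp only [zeroSet, Set.mem_setOf_eq, not_forall] at hxD
    obtain ⟨f, hfS, v, hv, hmk, hfv⟩ := hxD
    refine ⟨f, ?_, ?_⟩
    · intro hmem
      exact hfv (hmem v hv (by rw [hmk]; exact hxW))
    · intro w hw hwD
      have hwD' : Projectivization.mk k w hw ∈ D := hwD
      exact ((Set.ext_iff.mp hDeq _).mp hwD') f hfS w hw rfl
  choose gfun hgI hgD using hchoice
  haveI : Countable 𝒟 := h𝒟.to_subtype
  -- the countable set of nonzero elements in the quotient domain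
  set π := Ideal.Quotient.mkₐ k I with hπ
  set G : Set (MvPolynomial (Fin (n+1)) k ⧸ I) :=
    (π '' (Set.range gfun ∪ {X j})) with hG
  have hGc : G.Countable := ((Set.countable_range gfun).union (Set.countable_singleton _)).image _
  have hG0 : ∀ g ∈ G, g ≠ 0 := by
    rintro g ⟨f, hf, rfl⟩
    rw [Ne, Ideal.Quotient.mkₐ_eq_mk, Ideal.Quotient.eq_zero_iff_mem]
    rcases hf with ⟨D, rfl⟩ | hf
    · exact hgI D
    · rw [Set.mem_singleton_iff] at hf
      subst hf
      exact hXj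
  -- countable dimension of the quotient
  have hrank : Module.rank k (MvPolynomial (Fin (n+1)) k ⧸ I) ≤ Cardinal.aleph0 := by
    refine aux_rank_le_aleph0_of_countable_span
      (U := π '' (Set.range fun (m : Fin (n+1) →₀ ℕ) => (monomial m (1:k)))) ?_ ?_
    · exact (Set.countable_range _).image _
    · have hsp : Submodule.span k (Set.range fun (m : Fin (n+1) →₀ ℕ) => (monomial m (1:k)))
          = ⊤ := by
        have := (MvPolynomial.basisMonomials (Fin (n+1)) k).span_eq
        rwa [MvPolynomial.coe_basisMonomials] at this
      have himg : Submodule.span k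
            (⇑π '' (Set.range fun (m : Fin (n+1) →₀ ℕ) => (monomial m (1:k))))
          = Submodule.map π.toLinearMap
            (Submodule.span k (Set.range fun (m : Fin (n+1) →₀ ℕ) => (monomial m (1:k)))) :=
        Submodule.span_image π.toLinearMap
      rw [himg, hsp, Submodule.map_top, LinearMap.range_eq_top]
      exact Ideal.Quotient.mkₐ_surjective k I
  obtain ⟨ψ, hψ⟩ := aux_exists_algHom_ne_zero hrank G hGc hG0
  -- the resulting point
  set p : Fin (n+1) → k := fun i => ψ (π (X i)) with hp
  have hkey : ∀ f : MvPolynomial (Fin (n+1)) k, eval p f = ψ (π f) := by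
    have : (MvPolynomial.aeval p : MvPolynomial (Fin (n+1)) k →ₐ[k] k) = ψ.comp π := by
      apply MvPolynomial.algHom_ext
      intro i
      simp [hp]
    intro f
    have h2 : MvPolynomial.eval p f = MvPolynomial.aeval p f := by
      rw [← MvPolynomial.coe_aeval_eq_eval]
      rfl
    rw [h2, this]
    rfl
  have hpj : p j ≠ 0 := hψ _ ⟨X j, Or.inr rfl, rfl⟩
  have hpne : p ≠ 0 := fun hc => hpj (by rw [hc]; rfl)
  have hpW : Projectivization.mk k p hpne ∈ W := by
    rw [hWeq]
    refine (aux_mk_mem_zeroSet_iff hSW hpne).mpr ?_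
    intro f hf
    have hfI : f ∈ I := by
      intro v hv hvW
      rw [hWeq] at hvW
      exact hvW f hf v hv rfl
    rw [hkey f, Ideal.Quotient.mkₐ_eq_mk, Ideal.Quotient.eq_zero_iff_mem.mpr hfI]
    rw [map_zero]
  obtain ⟨D, hD, hpD⟩ := hcov hpW
  have h1 : eval p (gfun ⟨D, hD⟩) = 0 := hgD ⟨D, hD⟩ p hpne hpD
  have h2 : ψ (π (gfun ⟨D, hD⟩)) ≠ 0 := hψ _ ⟨gfun ⟨D, hD⟩, Or.inl ⟨⟨D, hD⟩, rfl⟩, rfl⟩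
  rw [hkey] at h1
  exact h2 h1

end AuxGeom

/-- Every c-component of a c-closed subgroup `K` of an abelian variety over an
uncountable algebraically closed field is a translate of the component `A₀`
through `0`: for every `x ∈ K` the translate `x + A₀` is a member of the
irredundant decomposition of `K`, and conversely every member is such a
translate. -/
theorem statement12 (k : Type) [Field k] [IsAlgClosed k] [Uncountable k]
    {n : ℕ} (A : AbelianVariety k n) (K : Set (ProjSpace k n))
    (hsub : A.IsSubgroupSet K) (hcc : A.IsCClosed K)
    (𝒞 : Set (Set (ProjSpace k n))) (hdec : A.IsIrredundantDecomp K 𝒞)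
    (A₀ : Set (ProjSpace k n)) (hA₀ : A₀ ∈ 𝒞) (h0 : A.zero ∈ A₀) :
    (∀ x ∈ K, ∃ C ∈ 𝒞, A.translate x A₀ = C) ∧
      ∀ C ∈ 𝒞, ∃ x ∈ K, C = A.translate x A₀ := by
  classical
  obtain ⟨hKA, hK0, hKadd, hKneg⟩ := hsub
  obtain ⟨h𝒞c, h𝒞irr, hKeq, h𝒞ir⟩ := hdec
  have hCsubK : ∀ C ∈ 𝒞, C ⊆ K := by
    intro C hC x hx
    rw [hKeq]
    exact ⟨C, hC, hx⟩
  -- every irreducible Zariski closed subset of `K` is contained in some component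
  have hL : ∀ W, A.ZClosedIrred W → W ⊆ K → ∃ C ∈ 𝒞, W ⊆ C := by
    intro W hW hWK
    obtain ⟨⟨hWA, CW, hCW, hWeq0⟩, hirr⟩ := hW
    have hWc : ProjClosed k W := by
      rw [hWeq0]
      exact aux_projClosed_inter A.carrier_closed hCW
    refine aux_subset_of_countable_cover hWc hWA hirr 𝒞 h𝒞c ?_ ?_
    · intro C hC
      obtain ⟨⟨hCA, C', hC', hCeq⟩, _⟩ := h𝒞irr C hC
      rw [hCeq]
      exact aux_projClosed_inter A.carrier_closed hC'
    · rw [← hKeq]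
      exact hWK
  -- translates of irreducible closed sets are irreducible closed
  have htrans_closed : ∀ x ∈ A.carrier, ∀ W, A.ZClosedIrred W →
      A.ZClosedIrred (A.translate x W) := by
    intro x hxA W hW
    have h1 : A.translate x W = Set.image2 A.add {x} W := by
      rw [Set.image2_singleton_left]
      rfl
    rw [h1]
    exact A.image2_add_closed _ _ (A.singleton_closed x hxA) hW
  -- group computations
  have hinv : ∀ u ∈ A.carrier, ∀ w ∈ A.carrier, A.add (A.neg u) (A.add u w) = w := by
    intro u hu w hw
    rw [← A.add_assoc _ (A.neg_mem hu) u hu w hw, A.neg_add_cancel u hu, A.zero_add w hw]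
  have hinv2 : ∀ u ∈ A.carrier, ∀ w ∈ A.carrier, A.add u (A.add (A.neg u) w) = w := by
    intro u hu w hw
    rw [← A.add_assoc u hu _ (A.neg_mem hu) w hw, A.add_comm u hu _ (A.neg_mem hu),
      A.neg_add_cancel u hu, A.zero_add w hw]
  have hA₀irr := h𝒞irr A₀ hA₀
  have part1 : ∀ x ∈ K, ∃ C ∈ 𝒞, A.translate x A₀ = C := by
    intro x hx
    have hxA := hKA hx
    have hT : A.ZClosedIrred (A.translate x A₀) := htrans_closed x hxA A₀ hA₀irr
    have hTK : A.translate x A₀ ⊆ K := by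
      rintro y ⟨a, ha, rfl⟩
      exact hKadd x hx a (hCsubK A₀ hA₀ ha)
    obtain ⟨C, hC, hTC⟩ := hL _ hT hTK
    have hCirr := h𝒞irr C hC
    have hnx : A.neg x ∈ K := hKneg x hx
    have hT2 : A.ZClosedIrred (A.translate (A.neg x) C) :=
      htrans_closed _ (hKA hnx) C hCirr
    have hT2K : A.translate (A.neg x) C ⊆ K := by
      rintro y ⟨c, hc, rfl⟩
      exact hKadd _ hnx c (hCsubK C hC hc)
    obtain ⟨D, hD, hT2D⟩ := hL _ hT2 hT2K
    have hA₀D : A₀ ⊆ D := by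
      intro a ha
      have haA : a ∈ A.carrier := hKA (hCsubK A₀ hA₀ ha)
      have h1 : A.add x a ∈ C := hTC ⟨a, ha, rfl⟩
      have h2 : A.add (A.neg x) (A.add x a) ∈ A.translate (A.neg x) C := ⟨_, h1, rfl⟩
      rw [hinv x hxA a haA] at h2
      exact hT2D h2
    have hA₀eq : A₀ = D := h𝒞ir A₀ hA₀ D hD hA₀D
    have hCT : C ⊆ A.translate x A₀ := by
      intro c hc
      have hcA : c ∈ A.carrier := hKA (hCsubK C hC hc)
      have h1 : A.add (A.neg x) c ∈ A₀ := by
        rw [hA₀eq]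
        exact hT2D ⟨c, hc, rfl⟩
      exact ⟨A.add (A.neg x) c, h1, hinv2 x hxA c hcA⟩
    exact ⟨C, hC, Set.Subset.antisymm hTC hCT⟩
  refine ⟨part1, ?_⟩
  intro C hC
  obtain ⟨x, hxC⟩ := (h𝒞irr C hC).2.1
  have hxK : x ∈ K := hCsubK C hC hxC
  refine ⟨x, hxK, ?_⟩
  have hxA := hKA hxK
  have hnx : A.neg x ∈ K := hKneg x hxK
  have hT2 : A.ZClosedIrred (A.translate (A.neg x) C) :=
    htrans_closed _ (hKA hnx) C (h𝒞irr C hC)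
  have hT2K : A.translate (A.neg x) C ⊆ K := by
    rintro y ⟨c, hc, rfl⟩
    exact hKadd _ hnx c (hCsubK C hC hc)
  obtain ⟨D, hD, hT2D⟩ := hL _ hT2 hT2K
  have h0D : A.zero ∈ D := hT2D ⟨x, hxC, A.neg_add_cancel x hxA⟩
  have hE0 : A.ZClosedIrred (Set.image2 A.add D A₀) :=
    A.image2_add_closed D A₀ (h𝒞irr D hD) hA₀irr
  have hEK : Set.image2 A.add D A₀ ⊆ K := by
    rintro y ⟨d, hd, a, ha, rfl⟩
    exact hKadd d (hCsubK D hD hd) a (hCsubK A₀ hA₀ ha)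
  obtain ⟨E, hE, hDE⟩ := hL _ hE0 hEK
  have hA₀E : A₀ ⊆ E := by
    intro a ha
    exact hDE ⟨A.zero, h0D, a, ha, A.zero_add a (hKA (hCsubK A₀ hA₀ ha))⟩
  have hAE : A₀ = E := h𝒞ir A₀ hA₀ E hE hA₀E
  have hDA₀ : D ⊆ A₀ := by
    intro d hd
    have hdA : d ∈ A.carrier := hKA (hCsubK D hD hd)
    have h1 : A.add d A.zero ∈ E := hDE ⟨d, hd, A.zero, h0, rfl⟩
    rw [A.add_comm d hdA A.zero A.zero_mem, A.zero_add d hdA] at h1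
    rw [hAE]
    exact h1
  have hDeqA₀ : D = A₀ := h𝒞ir D hD A₀ hA₀ hDA₀
  have hCsub : C ⊆ A.translate x A₀ := by
    intro c hc
    have hcA : c ∈ A.carrier := hKA (hCsubK C hC hc)
    have h1 : A.add (A.neg x) c ∈ A₀ := by
      rw [← hDeqA₀]
      exact hT2D ⟨c, hc, rfl⟩
    exact ⟨A.add (A.neg x) c, h1, hinv2 x hxA c hcA⟩
  obtain ⟨C', hC', hTC'⟩ := part1 x hxK
  have hCC' : C = C' := by
    refine h𝒞ir C hC C' hC' ?_
    rw [← hTC']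
    exact hCsub
  rw [hCC', ← hTC']
end
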